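/- arXiv:2509.16928 — 3 statements merged into one kernel-verified Lean document; each statement's English description precedes it below -/
import Mathlib

section
/- For every continuous function φ : [0,t] → ℝ and every s ∈ [0,t], one has min_{s ≤ u ≤ t} (2 max_{0 ≤ v ≤ u} φ(v) − φ(u)) = 2 max_{0 ≤ u ≤ s} φ(u) − min{ max_{0 ≤ u ≤ s} φ(u), max_{s ≤ u ≤ t} φ(u) }. -/
open Set

/-- Pitman's transform identity for the running minimum of `𝒫(φ)` over `[s,t]`. -/
theorem pitman_min_identity (t : ℝ) (ht : 0 < t) (φ : ℝ → ℝ)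
    (hφ : ContinuousOn φ (Icc 0 t)) (s : ℝ) (hs : s ∈ Icc 0 t) :
    sInf ((fun u => 2 * sSup (φ '' Icc 0 u) - φ u) '' Icc s t)
      = 2 * sSup (φ '' Icc 0 s)
        - min (sSup (φ '' Icc 0 s)) (sSup (φ '' Icc s t)) := by
  obtain ⟨h0s, hst⟩ := hs
  have hB : BddAbove (φ '' Icc 0 t) :=
    (isCompact_Icc.image_of_continuousOn hφ).bddAbove
  have hBsub : ∀ {A : Set ℝ}, A ⊆ Icc 0 t → BddAbove (φ '' A) :=
    fun h => hB.mono (image_mono (f := φ) h)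
  have hle : ∀ u, u ∈ Icc 0 t → φ u ≤ sSup (φ '' Icc 0 u) := by
    intro u hu
    exact le_csSup (hBsub (Icc_subset_Icc le_rfl hu.2)) (mem_image_of_mem φ ⟨hu.1, le_rfl⟩)
  have hmono : ∀ u u', 0 ≤ u → u ≤ u' → u' ≤ t →
      sSup (φ '' Icc 0 u) ≤ sSup (φ '' Icc 0 u') := by
    intro u u' h0 huu' hu't
    exact csSup_le_csSup (hBsub (Icc_subset_Icc le_rfl hu't))
      ⟨φ 0, mem_image_of_mem φ ⟨le_rfl, h0⟩⟩
      (image_mono (f := φ) (Icc_subset_Icc le_rfl huu'))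
  have hleN : ∀ u, u ∈ Icc s t → φ u ≤ sSup (φ '' Icc s t) := by
    intro u hu
    exact le_csSup (hBsub (Icc_subset_Icc h0s le_rfl)) (mem_image_of_mem φ hu)
  set Ms := sSup (φ '' Icc 0 s) with hMs
  set N := sSup (φ '' Icc s t) with hNdef
  have hlb : ∀ x ∈ (fun u => 2 * sSup (φ '' Icc 0 u) - φ u) '' Icc s t,
      2 * Ms - min Ms N ≤ x := by
    rintro x ⟨u, hu, rfl⟩
    have h0u : 0 ≤ u := h0s.trans hu.1
    have h1 : Ms ≤ sSup (φ '' Icc 0 u) := hmono s u h0s hu.1 hu.2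
    have h2 : φ u ≤ sSup (φ '' Icc 0 u) := hle u ⟨h0u, hu.2⟩
    have h3 : φ u ≤ N := hleN u hu
    rcases min_cases Ms N with ⟨hm, _⟩ | ⟨hm, _⟩ <;> rw [hm] <;> dsimp only <;> linarith
  have hne : ((fun u => 2 * sSup (φ '' Icc 0 u) - φ u) '' Icc s t).Nonempty :=
    ⟨_, mem_image_of_mem _ (left_mem_Icc.2 hst)⟩
  have hbdd : BddBelow ((fun u => 2 * sSup (φ '' Icc 0 u) - φ u) '' Icc s t) :=
    ⟨_, hlb⟩
  refine le_antisymm ?_ (le_csInf hne hlb)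
  obtain ⟨w, hw, hwN⟩ := isCompact_Icc.exists_sSup_image_eq ⟨s, left_mem_Icc.2 hst⟩
    (hφ.mono (Icc_subset_Icc h0s le_rfl))
  rcases le_or_gt N Ms with hNM | hMN
  · -- min = N; take the point attaining N
    have hMw : sSup (φ '' Icc 0 w) = Ms := by
      refine le_antisymm (csSup_le ⟨φ 0, mem_image_of_mem φ ⟨le_rfl, h0s.trans hw.1⟩⟩ ?_)
        (hmono s w h0s hw.1 hw.2)
      rintro y ⟨v, hv, rfl⟩
      rcases le_or_gt v s with h | h
      · exact le_csSup (hBsub (Icc_subset_Icc le_rfl hst)) (mem_image_of_mem φ ⟨hv.1, h⟩)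
      · exact (hleN v ⟨h.le, hv.2.trans hw.2⟩).trans hNM
    rw [min_eq_right hNM]
    have heq : 2 * Ms - N = 2 * sSup (φ '' Icc 0 w) - φ w := by rw [hMw, ← hwN]
    rw [heq]
    exact csInf_le hbdd (mem_image_of_mem _ hw)
  · -- min = Ms; take the first point in [s,w] where φ = Ms
    have hφsw : ContinuousOn φ (Icc s w) :=
      hφ.mono (Icc_subset_Icc h0s hw.2)
    have hφs : φ s ≤ Ms := hle s ⟨h0s, hst⟩
    have hC : (Icc s w ∩ φ ⁻¹' {Ms}).Nonempty := by
      have := intermediate_value_Icc hw.1 hφsw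
      have hmem : Ms ∈ Icc (φ s) (φ w) := ⟨hφs, by rw [← hwN]; exact hMN.le⟩
      obtain ⟨u0, hu0, hu0M⟩ := this hmem
      exact ⟨u0, hu0, hu0M⟩
    have hCcl : IsClosed (Icc s w ∩ φ ⁻¹' {Ms}) :=
      hφsw.preimage_isClosed_of_isClosed isClosed_Icc isClosed_singleton
    have hCbdd : BddBelow (Icc s w ∩ φ ⁻¹' {Ms}) := ⟨s, fun x hx => hx.1.1⟩
    set u := sInf (Icc s w ∩ φ ⁻¹' {Ms}) with hu
    have huC : u ∈ Icc s w ∩ φ ⁻¹' {Ms} := hCcl.csInf_mem hC hCbdd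
    have hφu : φ u = Ms := huC.2
    have hust : u ∈ Icc s t := ⟨huC.1.1, huC.1.2.trans hw.2⟩
    have hMu : sSup (φ '' Icc 0 u) = Ms := by
      refine le_antisymm (csSup_le ⟨φ 0, mem_image_of_mem φ ⟨le_rfl, h0s.trans huC.1.1⟩⟩ ?_)
        (hmono s u h0s huC.1.1 hust.2)
      rintro y ⟨v, hv, rfl⟩
      rcases le_or_gt v s with h | h
      · exact le_csSup (hBsub (Icc_subset_Icc le_rfl hst)) (mem_image_of_mem φ ⟨hv.1, h⟩)
      · by_contra hgt
        push_neg at hgt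
        have hmem : Ms ∈ Icc (φ s) (φ v) := ⟨hφs, hgt.le⟩
        have hsubIVT : ContinuousOn φ (Icc s v) :=
          hφsw.mono (Icc_subset_Icc le_rfl (hv.2.trans huC.1.2))
        obtain ⟨x, hx, hxM⟩ := intermediate_value_Icc h.le hsubIVT hmem
        have hxC : x ∈ Icc s w ∩ φ ⁻¹' {Ms} :=
          ⟨⟨hx.1, (hx.2.trans hv.2).trans huC.1.2⟩, hxM⟩
        have hux : u ≤ x := csInf_le hCbdd hxC
        have hxv : x = v := le_antisymm hx.2 (hv.2.trans hux)
        rw [hxv] at hxM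
        linarith
    rw [min_eq_left hMN.le]
    have heq : 2 * Ms - Ms = 2 * sSup (φ '' Icc 0 u) - φ u := by rw [hMu, hφu]
    rw [heq]
    exact csInf_le hbdd (mem_image_of_mem _ hust)
end

section
/- Let t > 0, x ∈ ℝ, and let φ : [0,t] → ℝ be continuous with φ(0) = 0 and φ(t) = −|x|. Then for all s ∈ [0,t], 2 max_{0 ≤ u ≤ s} φ(u) − min{ min_{s ≤ u ≤ t} 𝒫(φ)(u), 𝒫(φ)(t) − |x| } = min{ max_{0 ≤ u ≤ s} φ(u), (max_{s ≤ u ≤ t} φ(u))₊ }, where a₊ := max{a,0}. -/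
open Set

/-- The key deterministic identity behind Lévy's theorem for Brownian bridges,
where `𝒫(φ)(u) = 2 max_{0≤v≤u} φ(v) − φ(u)`. -/
theorem levy_bridge_identity (t : ℝ) (ht : 0 < t) (x : ℝ) (φ : ℝ → ℝ)
    (hφ : ContinuousOn φ (Icc 0 t)) (h0 : φ 0 = 0) (hT : φ t = -|x|)
    (s : ℝ) (hs : s ∈ Icc 0 t) :
    2 * sSup (φ '' Icc 0 s)
        - min (sInf ((fun u => 2 * sSup (φ '' Icc 0 u) - φ u) '' Icc s t))
            ((2 * sSup (φ '' Icc 0 t) - φ t) - |x|)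
      = min (sSup (φ '' Icc 0 s)) (max (sSup (φ '' Icc s t)) 0) := by
  obtain ⟨hs0, hst⟩ := hs
  set M := sSup (φ '' Icc 0 s) with hMdef
  set N := sSup (φ '' Icc s t) with hNdef
  have hne0s : (φ '' Icc 0 s).Nonempty := (nonempty_Icc.mpr hs0).image φ
  have hnest : (φ '' Icc s t).Nonempty := (nonempty_Icc.mpr hst).image φ
  have hcomp : ∀ a b : ℝ, 0 ≤ a → b ≤ t → IsCompact (φ '' Icc a b) := fun a b ha hb =>
    isCompact_Icc.image_of_continuousOn (hφ.mono (Icc_subset_Icc ha hb))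
  have hbdd0s : BddAbove (φ '' Icc 0 s) := (hcomp 0 s le_rfl hst).bddAbove
  have hbddst : BddAbove (φ '' Icc s t) := (hcomp s t hs0 le_rfl).bddAbove
  have hφleM : ∀ u ∈ Icc (0:ℝ) s, φ u ≤ M := fun u hu => le_csSup hbdd0s ⟨u, hu, rfl⟩
  have hφleN : ∀ u ∈ Icc s t, φ u ≤ N := fun u hu => le_csSup hbddst ⟨u, hu, rfl⟩
  have hM0 : 0 ≤ M := by simpa [h0] using hφleM 0 ⟨le_rfl, hs0⟩
  have hsplit : ∀ u ∈ Icc s t, sSup (φ '' Icc 0 u) = max M (sSup (φ '' Icc s u)) := by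
    intro u hu
    have h1 : Icc (0:ℝ) u = Icc 0 s ∪ Icc s u := (Icc_union_Icc_eq_Icc hs0 hu.1).symm
    rw [h1, image_union, csSup_union hbdd0s hne0s ((hcomp s u hs0 hu.2).bddAbove)
      ((nonempty_Icc.mpr hu.1).image φ)]
  have hSuN : ∀ u ∈ Icc s t, sSup (φ '' Icc s u) ≤ N := by
    intro u hu
    refine csSup_le ((nonempty_Icc.mpr hu.1).image φ) ?_
    rintro b ⟨v, hv, rfl⟩
    exact hφleN v ⟨hv.1, hv.2.trans hu.2⟩
  have hlb : ∀ b ∈ (fun u => 2 * sSup (φ '' Icc 0 u) - φ u) '' Icc s t,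
      2 * M - min M N ≤ b := by
    rintro b ⟨u, hu, rfl⟩
    have hφSu : φ u ≤ sSup (φ '' Icc s u) :=
      le_csSup ((hcomp s u hs0 hu.2).bddAbove) ⟨u, ⟨hu.1, le_rfl⟩, rfl⟩
    have hfu : sSup (φ '' Icc 0 u) = max M (sSup (φ '' Icc s u)) := hsplit u hu
    have h1 : M ≤ max M (sSup (φ '' Icc s u)) := le_max_left _ _
    have h2 : φ u ≤ max M (sSup (φ '' Icc s u)) := hφSu.trans (le_max_right _ _)
    have hN : φ u ≤ N := hφleN u hu
    rcases le_total (φ u) M with h | h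
    · have h3 : φ u ≤ min M N := le_min h hN
      simp only [hfu]; linarith
    · have hMN : M ≤ N := h.trans hN
      rw [min_eq_left hMN]
      simp only [hfu]; linarith
  have hIne : ((fun u => 2 * sSup (φ '' Icc 0 u) - φ u) '' Icc s t).Nonempty :=
    (nonempty_Icc.mpr hst).image _
  have hbddB : BddBelow ((fun u => 2 * sSup (φ '' Icc 0 u) - φ u) '' Icc s t) :=
    ⟨2 * M - min M N, hlb⟩
  have hIlb : 2 * M - min M N ≤
      sInf ((fun u => 2 * sSup (φ '' Icc 0 u) - φ u) '' Icc s t) := le_csInf hIne hlb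
  have hIub : sInf ((fun u => 2 * sSup (φ '' Icc 0 u) - φ u) '' Icc s t)
      ≤ 2 * M - min M N := by
    obtain ⟨w, hw, hφw⟩ : N ∈ φ '' Icc s t := (hcomp s t hs0 le_rfl).sSup_mem hnest
    rcases le_total N M with hNM | hMN
    · have hval : (fun u => 2 * sSup (φ '' Icc 0 u) - φ u) w = 2 * M - N := by
        simp only [hsplit w hw, hφw, max_eq_left ((hSuN w hw).trans hNM)]
      rw [min_eq_right hNM]
      calc sInf _ ≤ _ := csInf_le hbddB ⟨w, hw, rfl⟩
        _ = 2 * M - N := hval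
    · -- first hitting time of level M on [s, w]
      have hφs : φ s ≤ M := hφleM s ⟨hs0, le_rfl⟩
      have hMmem : M ∈ φ '' Icc s w :=
        intermediate_value_Icc hw.1 (hφ.mono (Icc_subset_Icc hs0 hw.2))
          ⟨hφs, by rw [hφw]; exact hMN⟩
      set S := Icc s w ∩ φ ⁻¹' {M} with hSdef
      have hSclosed : IsClosed S :=
        (hφ.mono (Icc_subset_Icc hs0 hw.2)).preimage_isClosed_of_isClosed
          isClosed_Icc isClosed_singleton
      have hScomp : IsCompact S :=
        isCompact_Icc.of_isClosed_subset hSclosed inter_subset_left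
      have hSne : S.Nonempty := by
        obtain ⟨v, hv, hφv⟩ := hMmem; exact ⟨v, hv, hφv⟩
      have hSbdd : BddBelow S := ⟨s, fun z hz => hz.1.1⟩
      obtain ⟨huIcc, huM⟩ := hScomp.sInf_mem hSne
      set u := sInf S with hudef
      have huM' : φ u = M := huM
      have hle : ∀ v ∈ Icc s u, φ v ≤ M := by
        intro v hv
        by_contra hc
        push_neg at hc
        have hvw : v ∈ Icc s w := ⟨hv.1, hv.2.trans huIcc.2⟩
        obtain ⟨w', hw', hφw'⟩ : M ∈ φ '' Icc s v :=
          intermediate_value_Icc hv.1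
            (hφ.mono (Icc_subset_Icc hs0 (hvw.2.trans hw.2))) ⟨hφs, hc.le⟩
        have hw'S : w' ∈ S := ⟨⟨hw'.1, hw'.2.trans hvw.2⟩, hφw'⟩
        have h1 : u ≤ w' := csInf_le hSbdd hw'S
        have hvu : v = u := le_antisymm hv.2 (h1.trans hw'.2)
        rw [hvu, huM'] at hc
        exact lt_irrefl M hc
      have huT : u ∈ Icc s t := ⟨huIcc.1, huIcc.2.trans hw.2⟩
      have hSu : sSup (φ '' Icc s u) ≤ M := by
        refine csSup_le ((nonempty_Icc.mpr huIcc.1).image φ) ?_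
        rintro b ⟨v, hv, rfl⟩
        exact hle v hv
      have hval : (fun z => 2 * sSup (φ '' Icc 0 z) - φ z) u = 2 * M - M := by
        simp only [hsplit u huT, max_eq_left hSu, huM']
      rw [min_eq_left hMN]
      calc sInf _ ≤ _ := csInf_le hbddB ⟨u, huT, rfl⟩
        _ = 2 * M - M := hval
  have hI : sInf ((fun u => 2 * sSup (φ '' Icc 0 u) - φ u) '' Icc s t)
      = 2 * M - min M N := le_antisymm hIub hIlb
  have hTeq : 2 * sSup (φ '' Icc 0 t) - φ t - |x| = 2 * max M N := by
    rw [hsplit t ⟨hst, le_rfl⟩, hT]; ring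
  rw [hI, show (2 * sSup (φ '' Icc 0 t) - φ t) - |x| = 2 * max M N from hTeq]
  rcases le_total N M with h1 | h1 <;> rcases le_total N 0 with h2 | h2
  · rw [min_eq_right h1, max_eq_left h1, max_eq_right h2, min_eq_right hM0,
      min_eq_right (by linarith : 2 * M ≤ 2 * M - N)]
    ring
  · rw [min_eq_right h1, max_eq_left h1, max_eq_left h2, min_eq_right h1,
      min_eq_left (by linarith : 2 * M - N ≤ 2 * M)]
    ring
  · rw [min_eq_left h1, max_eq_right h1, max_eq_right h2, min_eq_right hM0,
      min_eq_left (by linarith : 2 * M - M ≤ 2 * N)]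
    linarith
  · rw [min_eq_left h1, max_eq_right h1, max_eq_left h2, min_eq_left h1,
      min_eq_left (by linarith : 2 * M - M ≤ 2 * N)]
    ring
end

section
/- Let t > 0, y ∈ ℝ, and φ : [0,t] → ℝ continuous. Define ℒ_y(ψ)(s) := −ψ(s) + min{ 2 min_{s ≤ u ≤ t} ψ(u), ψ(t) + y } for continuous ψ. Then ℒ_{φ(t)}(𝒫(φ))(s) = φ(s) for all s ∈ [0,t], where 𝒫(φ)(u) = 2 max_{0 ≤ v ≤ u} φ(v) − φ(u). -/
open Set

private noncomputable def pitmanM (φ : ℝ → ℝ) (u : ℝ) : ℝ := sSup (φ '' Icc 0 u)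

/-- `ℒ_{φ(t)}` is a left inverse of the Pitman transform:
`ℒ_{φ(t)}(𝒫(φ))(s) = φ(s)` for all `s ∈ [0,t]`, where
`𝒫(φ)(u) = 2 max_{0≤v≤u} φ(v) − φ(u)` and
`ℒ_y(ψ)(s) = −ψ(s) + min{2 min_{s≤u≤t} ψ(u), ψ(t) + y}`. -/
theorem pitman_left_inverse (t : ℝ) (ht : 0 < t) (y : ℝ) (φ : ℝ → ℝ)
    (hφ : ContinuousOn φ (Icc 0 t)) (s : ℝ) (hs : s ∈ Icc 0 t) :
    -(2 * sSup (φ '' Icc 0 s) - φ s)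
        + min (2 * sInf ((fun u => 2 * sSup (φ '' Icc 0 u) - φ u) '' Icc s t))
            ((2 * sSup (φ '' Icc 0 t) - φ t) + φ t)
      = φ s := by
  obtain ⟨hs0, hst⟩ := hs
  show -(2 * pitmanM φ s - φ s)
        + min (2 * sInf ((fun u => 2 * pitmanM φ u - φ u) '' Icc s t))
            ((2 * pitmanM φ t - φ t) + φ t)
      = φ s
  set M : ℝ → ℝ := pitmanM φ with hMdef
  have hbdd : ∀ u ∈ Icc (0:ℝ) t, BddAbove (φ '' Icc 0 u) := fun u hu =>
    ((isCompact_Icc.image_of_continuousOn (hφ.mono (Icc_subset_Icc le_rfl hu.2)))).bddAbove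
  have hne : ∀ u ∈ Icc (0:ℝ) t, (φ '' Icc 0 u).Nonempty := fun u hu =>
    (nonempty_Icc.2 hu.1).image _
  have hφleM : ∀ u ∈ Icc (0:ℝ) t, ∀ v ∈ Icc (0:ℝ) u, φ v ≤ M u := fun u hu v hv =>
    le_csSup (hbdd u hu) (mem_image_of_mem _ hv)
  have hMmono : ∀ a ∈ Icc (0:ℝ) t, ∀ b ∈ Icc (0:ℝ) t, a ≤ b → M a ≤ M b := fun a ha b hb hab =>
    csSup_le_csSup (hbdd b hb) (hne a ha) (image_mono (Icc_subset_Icc le_rfl hab))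
  set P : ℝ → ℝ := fun u => 2 * M u - φ u with hPdef
  set I : ℝ := sInf (P '' Icc s t) with hIdef
  have hsmem : s ∈ Icc (0:ℝ) t := ⟨hs0, hst⟩
  have htmem : t ∈ Icc (0:ℝ) t := ⟨le_of_lt ht, le_rfl⟩
  have hlb : ∀ x ∈ P '' Icc s t, M s ≤ x := by
    rintro x ⟨u, hu, rfl⟩
    have hu' : u ∈ Icc (0:ℝ) t := ⟨hs0.trans hu.1, hu.2⟩
    have h1 : φ u ≤ M u := hφleM u hu' u ⟨hs0.trans hu.1, le_rfl⟩
    have h2 : M s ≤ M u := hMmono s hsmem u hu' hu.1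
    simp only [hPdef]
    linarith
  have hPne : (P '' Icc s t).Nonempty := (nonempty_Icc.2 hst).image _
  have hI1 : M s ≤ I := le_csInf hPne hlb
  have hMst : M s ≤ M t := hMmono s hsmem t htmem hst
  have hφst : ContinuousOn φ (Icc s t) := hφ.mono (Icc_subset_Icc hs0 le_rfl)
  have hI2 : min I (M t) ≤ M s := by
    rcases le_or_gt (M t) (M s) with h | h
    · exact (min_le_right _ _).trans h
    · -- M s < M t : the max over [0,t] is attained on [s,t]
      have hMtmem : M t ∈ φ '' Icc 0 t :=
        (isCompact_Icc.image_of_continuousOn hφ).sSup_mem (hne t htmem)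
      obtain ⟨v, hv0t, hvφ⟩ := hMtmem
      have hsv : s ≤ v := by
        by_contra h'
        have : φ v ≤ M s := hφleM s hsmem v ⟨hv0t.1, (not_le.mp h').le⟩
        rw [hvφ] at this; linarith
      -- A : points in [s,t] where φ ≥ M s
      set A : Set ℝ := Icc s t ∩ φ ⁻¹' Ici (M s) with hAdef
      have hAne : A.Nonempty := ⟨v, ⟨hsv, hv0t.2⟩, by rw [mem_preimage, hvφ]; exact le_of_lt h⟩
      have hAclosed : IsClosed A :=
        hφst.preimage_isClosed_of_isClosed isClosed_Icc isClosed_Ici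
      have hAbdd : BddBelow A := ⟨s, fun x hx => hx.1.1⟩
      set w : ℝ := sInf A with hwdef
      have hwA : w ∈ A := hAclosed.csInf_mem hAne hAbdd
      have hws : s ≤ w := hwA.1.1
      have hwt : w ≤ t := hwA.1.2
      have hw0t : w ∈ Icc (0:ℝ) t := ⟨hs0.trans hws, hwt⟩
      have hMsφw : M s ≤ φ w := hwA.2
      -- φ w ≤ M s
      have hφwMs : φ w ≤ M s := by
        rcases eq_or_lt_of_le hws with heq | hlt
        · rw [← heq]; exact hφleM s hsmem s ⟨hs0, le_rfl⟩
        · set B : Set ℝ := Icc s t ∩ φ ⁻¹' Iic (M s) with hBdef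
          have hBclosed : IsClosed B :=
            hφst.preimage_isClosed_of_isClosed isClosed_Icc isClosed_Iic
          have hsub : Ico s w ⊆ B := by
            rintro x ⟨hsx, hxw⟩
            refine ⟨⟨hsx, hxw.le.trans hwt⟩, ?_⟩
            rw [mem_preimage, mem_Iic]
            by_contra h'
            have hxA : x ∈ A := ⟨⟨hsx, hxw.le.trans hwt⟩, (not_le.mp h').le⟩
            exact absurd (csInf_le hAbdd hxA) (not_le.mpr hxw)
          have hwcl : w ∈ closure (Ico s w) := by
            rw [closure_Ico (ne_of_lt hlt)]; exact ⟨hws, le_rfl⟩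
          have : w ∈ B := hBclosed.closure_subset ((closure_mono hsub) hwcl)
          exact this.2
      have hφwEq : φ w = M s := le_antisymm hφwMs hMsφw
      -- M w = M s
      have hMwMs : M w ≤ M s := by
        apply csSup_le (hne w hw0t)
        rintro x ⟨z, hz, rfl⟩
        rcases le_or_gt z s with hzs | hsz
        · exact hφleM s hsmem z ⟨hz.1, hzs⟩
        · rcases eq_or_lt_of_le hz.2 with hzw | hzw
          · rw [hzw, hφwEq]
          · by_contra h'
            have hzA : z ∈ A := ⟨⟨hsz.le, hz.2.trans hwt⟩, (not_le.mp h').le⟩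
            exact absurd (csInf_le hAbdd hzA) (not_le.mpr hzw)
      have hMwEq : M w = M s := le_antisymm hMwMs (hMmono s hsmem w hw0t hws)
      have hPw : P w = M s := by simp only [hPdef]; rw [hMwEq, hφwEq]; ring
      have : I ≤ M s := by
        rw [← hPw]
        exact csInf_le ⟨M s, hlb⟩ (mem_image_of_mem _ ⟨hws, hwt⟩)
      exact (min_le_left _ _).trans this
  have hmin : min I (M t) = M s := le_antisymm hI2 (le_min hI1 hMst)
  have h2t : (2 * M t - φ t) + φ t = 2 * M t := by ring
  rw [h2t]
  rcases le_total I (M t) with h | h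
  · rw [min_eq_left h] at hmin
    rw [min_eq_left (by linarith : 2 * I ≤ 2 * M t)]
    linarith
  · rw [min_eq_right h] at hmin
    rw [min_eq_right (by linarith : 2 * M t ≤ 2 * I)]
    linarith
end
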